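/- (Proposition 1) In the Mussa–Rosen model with the fixed-market-share collusive scheme, grim-trigger punishment and common discount factor δ ∈ (0,1), suppose all noncollusive margins m_k = p_k^* − c_k are positive and Δ = p_1^c − p_1^* > 0. Then for any two firms i, j ∈ {1,…,n} with j ≠ i, if p_i^* − c_i > p_j^* − c_j, then the critical discount factors satisfy δ̄_i < δ̄_j, where δ̄_k = ((1/4)Δ)/((1/4)Δ + m_k) = (π_k^d − π_k^c)/(π_k^d − π_k^*); consequently firm i has the strictly weaker incentive constraint: whenever Ω_j ≡ π_j^c − (1−δ)π_j^d − δπ_j^* ≥ 0, one also has Ω_i ≡ π_i^c − (1−δ)π_i^d − δπ_i^* > 0. -/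

import Mathlib

/-- Per-period profit of firm `k` in the `n`-firm Mussa–Rosen model at the price
vector `p` (qualities `v`, unit costs `c`, taste support `[θlo, θhi]`). -/
noncomputable def profitMR (n : ℕ) (v c : ℕ → ℝ) (θlo θhi : ℝ) (p : ℕ → ℝ) (k : ℕ) : ℝ :=
  if k = 1 then (p 1 - c 1) * ((p 2 - p 1) / (v 2 - v 1) - θlo)
  else if k = n then (p n - c n) * (θhi - (p n - p (n - 1)) / (v n - v (n - 1)))
  else (p k - c k) * ((p (k + 1) - p k) / (v (k + 1) - v k)
    - (p k - p (k - 1)) / (v k - v (k - 1)))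

/-- Best-response price of firm `k` to the rival prices in the vector `p`. -/
noncomputable def brMR (n : ℕ) (v c : ℕ → ℝ) (θlo θhi : ℝ) (p : ℕ → ℝ) (k : ℕ) : ℝ :=
  if k = 1 then (1/2) * (p 2 + c 1 - θlo * (v 2 - v 1))
  else if k = n then (1/2) * (p (n - 1) + c n + θhi * (v n - v (n - 1)))
  else (1/2) * (p (k - 1) * (v (k + 1) - v k) + p (k + 1) * (v k - v (k - 1)))
    / (v (k + 1) - v (k - 1)) + (1/2) * c k

lemma keyMR (n : ℕ) (hn : 3 ≤ n) (v c pstar pc : ℕ → ℝ) (θlo θhi : ℝ)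
    (hvmono : ∀ k, 1 ≤ k → k < n → v k < v (k + 1))
    (hnash : ∀ k, 1 ≤ k → k ≤ n → pstar k = brMR n v c θlo θhi pstar k)
    (Δ : ℝ) (hpc : ∀ k, pc k = pstar k + Δ)
    (k : ℕ) (hk1 : 1 ≤ k) (hkn : k ≤ n) :
    ∃ a : ℝ, 0 < a ∧
      profitMR n v c θlo θhi pstar k = a * (pstar k - c k)^2 ∧
      profitMR n v c θlo θhi pc k = a * ((pstar k - c k) * (pstar k - c k + Δ)) ∧
      profitMR n v c θlo θhi (Function.update pc k (brMR n v c θlo θhi pc k)) k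
        = a * (pstar k - c k + Δ/2)^2 := by
  rcases eq_or_ne k 1 with hk | hk1'
  · subst hk
    have hw : 0 < v 2 - v 1 := by
      have := hvmono 1 le_rfl (by omega); linarith
    have hnash1 : pstar 1 = (1/2) * (pstar 2 + c 1 - θlo * (v 2 - v 1)) := by
      have h := hnash 1 le_rfl (by omega)
      unfold brMR at h; rw [if_pos rfl] at h; exact h
    have hbr : brMR n v c θlo θhi pc 1 = pstar 1 + Δ/2 := by
      unfold brMR; rw [if_pos rfl, hpc 2]; linarith
    have h0 : (pstar 2 - pstar 1) / (v 2 - v 1) - θlo = (pstar 1 - c 1) / (v 2 - v 1) := by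
      field_simp
      linarith
    have hc : (pstar 2 + Δ - (pstar 1 + Δ)) / (v 2 - v 1) - θlo
        = (pstar 1 - c 1) / (v 2 - v 1) := by
      field_simp
      linarith
    have hd : (pstar 2 + Δ - (pstar 1 + Δ/2)) / (v 2 - v 1) - θlo
        = (pstar 1 - c 1 + Δ/2) / (v 2 - v 1) := by
      field_simp
      linarith
    refine ⟨1 / (v 2 - v 1), by positivity, ?_, ?_, ?_⟩
    · unfold profitMR; rw [if_pos rfl, h0]; ring
    · unfold profitMR; rw [if_pos rfl, hpc 1, hpc 2, hc]; ring
    · unfold profitMR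
      rw [if_pos rfl, Function.update_self,
        Function.update_of_ne (by norm_num : (2:ℕ) ≠ 1), hbr, hpc 2, hd]
      ring
  · rcases eq_or_ne k n with hk | hkn'
    · subst hk
      have hw : 0 < v k - v (k - 1) := by
        have h := hvmono (k - 1) (by omega) (by omega)
        have hkk : k - 1 + 1 = k := by omega
        rw [hkk] at h; linarith
      have hnashn : pstar k = (1/2) * (pstar (k - 1) + c k + θhi * (v k - v (k - 1))) := by
        have h := hnash k (by omega) le_rfl
        unfold brMR at h; rw [if_neg hk1', if_pos rfl] at h; exact h
      have hbr : brMR k v c θlo θhi pc k = pstar k + Δ/2 := by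
        unfold brMR; rw [if_neg hk1', if_pos rfl, hpc (k - 1)]; linarith
      have h0 : θhi - (pstar k - pstar (k - 1)) / (v k - v (k - 1))
          = (pstar k - c k) / (v k - v (k - 1)) := by
        field_simp
        linarith
      have hc : θhi - (pstar k + Δ - (pstar (k - 1) + Δ)) / (v k - v (k - 1))
          = (pstar k - c k) / (v k - v (k - 1)) := by
        field_simp
        linarith
      have hd : θhi - (pstar k + Δ/2 - (pstar (k - 1) + Δ)) / (v k - v (k - 1))
          = (pstar k - c k + Δ/2) / (v k - v (k - 1)) := by
        field_simp
        linarith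
      refine ⟨1 / (v k - v (k - 1)), by positivity, ?_, ?_, ?_⟩
      · unfold profitMR; rw [if_neg hk1', if_pos rfl, h0]; ring
      · unfold profitMR; rw [if_neg hk1', if_pos rfl, hpc k, hpc (k - 1), hc]; ring
      · unfold profitMR
        rw [if_neg hk1', if_pos rfl, Function.update_self,
          Function.update_of_ne (by omega : k - 1 ≠ k), hbr, hpc (k - 1), hd]
        ring
    · -- interior
      have hA : 0 < v (k + 1) - v k := by
        have := hvmono k (by omega) (by omega); linarith
      have hB : 0 < v k - v (k - 1) := by
        have h := hvmono (k - 1) (by omega) (by omega)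
        have hkk : k - 1 + 1 = k := by omega
        rw [hkk] at h; linarith
      have hABpos : 0 < v (k + 1) - v (k - 1) := by linarith
      have hnashk : pstar k = (1/2) * (pstar (k - 1) * (v (k + 1) - v k)
          + pstar (k + 1) * (v k - v (k - 1))) / (v (k + 1) - v (k - 1)) + (1/2) * c k := by
        have h := hnash k (by omega) (by omega)
        unfold brMR at h; rw [if_neg hk1', if_neg hkn'] at h; exact h
      have hnash' : 2 * pstar k * (v (k + 1) - v (k - 1))
          = pstar (k - 1) * (v (k + 1) - v k) + pstar (k + 1) * (v k - v (k - 1))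
            + c k * (v (k + 1) - v (k - 1)) := by
        field_simp at hnashk
        linarith
      have hbr : brMR n v c θlo θhi pc k = pstar k + Δ/2 := by
        unfold brMR; rw [if_neg hk1', if_neg hkn', hpc (k - 1), hpc (k + 1)]
        field_simp
        linear_combination (-1 : ℝ) * hnash'
      have h0 : (pstar (k + 1) - pstar k) / (v (k + 1) - v k)
            - (pstar k - pstar (k - 1)) / (v k - v (k - 1))
          = (pstar k - c k)
            * ((v (k + 1) - v (k - 1)) / ((v (k + 1) - v k) * (v k - v (k - 1)))) := by
        field_simp
        linear_combination -hnash'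
      have hc : (pstar (k + 1) + Δ - (pstar k + Δ)) / (v (k + 1) - v k)
            - (pstar k + Δ - (pstar (k - 1) + Δ)) / (v k - v (k - 1))
          = (pstar k - c k)
            * ((v (k + 1) - v (k - 1)) / ((v (k + 1) - v k) * (v k - v (k - 1)))) := by
        field_simp
        linear_combination -hnash'
      have hd : ∀ e : ℝ, (pstar (k + 1) + Δ - (pstar k + e)) / (v (k + 1) - v k)
            - (pstar k + e - (pstar (k - 1) + Δ)) / (v k - v (k - 1))
          = (pstar k - c k + Δ - e)
            * ((v (k + 1) - v (k - 1)) / ((v (k + 1) - v k) * (v k - v (k - 1)))) := by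
        intro e
        field_simp
        linear_combination -hnash'
      refine ⟨(v (k + 1) - v (k - 1)) / ((v (k + 1) - v k) * (v k - v (k - 1))),
        by positivity, ?_, ?_, ?_⟩
      · unfold profitMR; rw [if_neg hk1', if_neg hkn', h0]; ring
      · unfold profitMR; rw [if_neg hk1', if_neg hkn', hpc k, hpc (k - 1), hpc (k + 1), hc]
        ring
      · unfold profitMR
        rw [if_neg hk1', if_neg hkn', Function.update_self,
          Function.update_of_ne (by omega : k + 1 ≠ k),
          Function.update_of_ne (by omega : k - 1 ≠ k), hbr, hpc (k - 1), hpc (k + 1), hd (Δ/2)]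
        ring

/-- (Proposition 1) Mussa–Rosen model, fixed-market-share collusive scheme,
grim-trigger punishment, common discount factor `δ ∈ (0,1)`: if all noncollusive
margins are positive and `Δ = p_1^c − p_1^* > 0`, then for firms `i ≠ j` with
`p_i^* − c_i > p_j^* − c_j` the critical discount factors
`δ̄_k = ((1/4)Δ)/((1/4)Δ + m_k) = (π_k^d − π_k^c)/(π_k^d − π_k^*)` satisfy
`δ̄_i < δ̄_j`; consequently `Ω_j ≥ 0` implies `Ω_i > 0`. -/
theorem prop1_cartel_stability
    (n : ℕ) (hn : 3 ≤ n) (v c pstar pc : ℕ → ℝ) (θlo θhi : ℝ)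
    (hθ0 : 0 < θlo) (hθ : θlo < θhi)
    (hv1 : 0 < v 1) (hvmono : ∀ k, 1 ≤ k → k < n → v k < v (k + 1))
    (hcpos : ∀ k, 1 ≤ k → k ≤ n → 0 < c k)
    (hnash : ∀ k, 1 ≤ k → k ≤ n → pstar k = brMR n v c θlo θhi pstar k)
    (Δ : ℝ) (hΔ : 0 < Δ) (hΔdef : Δ = pc 1 - pstar 1)
    (hpc : ∀ k, pc k = pstar k + Δ)
    (hmargins : ∀ k, 1 ≤ k → k ≤ n → 0 < pstar k - c k)
    (i j : ℕ) (hi1 : 1 ≤ i) (hin : i ≤ n) (hj1 : 1 ≤ j) (hjn : j ≤ n) (hji : j ≠ i)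
    (hmargin : pstar j - c j < pstar i - c i) :
    (∀ k, 1 ≤ k → k ≤ n →
      (profitMR n v c θlo θhi (Function.update pc k (brMR n v c θlo θhi pc k)) k
          - profitMR n v c θlo θhi pc k)
        / (profitMR n v c θlo θhi (Function.update pc k (brMR n v c θlo θhi pc k)) k
          - profitMR n v c θlo θhi pstar k)
      = ((1/4) * Δ) / ((1/4) * Δ + (pstar k - c k)))
    ∧ ((1/4) * Δ) / ((1/4) * Δ + (pstar i - c i))
        < ((1/4) * Δ) / ((1/4) * Δ + (pstar j - c j))
    ∧ (∀ δ : ℝ, 0 < δ → δ < 1 →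
        profitMR n v c θlo θhi pc j
            - (1 - δ) * profitMR n v c θlo θhi
                (Function.update pc j (brMR n v c θlo θhi pc j)) j
            - δ * profitMR n v c θlo θhi pstar j ≥ 0 →
        profitMR n v c θlo θhi pc i
            - (1 - δ) * profitMR n v c θlo θhi
                (Function.update pc i (brMR n v c θlo θhi pc i)) i
            - δ * profitMR n v c θlo θhi pstar i > 0) := by
  have key := keyMR n hn v c pstar pc θlo θhi hvmono hnash Δ hpc
  have hmi := hmargins i hi1 hin
  have hmj := hmargins j hj1 hjn
  refine ⟨?_, ?_, ?_⟩
  · intro k hka hkb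
    obtain ⟨a, ha, h1, h2, h3⟩ := key k hka hkb
    have hm := hmargins k hka hkb
    rw [h1, h2, h3]
    have hden1 : (0:ℝ) < a * (pstar k - c k + Δ/2)^2 - a * (pstar k - c k)^2 := by
      nlinarith [mul_pos ha (mul_pos hΔ hm), mul_pos ha (mul_pos hΔ hΔ)]
    have hden2 : (0:ℝ) < (1/4) * Δ + (pstar k - c k) := by linarith
    rw [div_eq_div_iff (ne_of_gt hden1) (ne_of_gt hden2)]
    ring
  · exact div_lt_div_of_pos_left (by linarith) (by linarith) (by linarith)
  · intro δ hδ0 hδ1 hΩj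
    obtain ⟨aj, haj, hj1', hj2', hj3'⟩ := key j hj1 hjn
    obtain ⟨ai, hai, hi1', hi2', hi3'⟩ := key i hi1 hin
    rw [hj1', hj2', hj3'] at hΩj
    rw [hi1', hi2', hi3']
    have hEj : 0 ≤ δ * (Δ * (pstar j - c j)) + δ * (Δ^2/4) - Δ^2/4 := by
      by_contra h
      push_neg at h
      nlinarith [mul_pos haj (by nlinarith : (0:ℝ) <
        Δ^2/4 - δ * (Δ * (pstar j - c j)) - δ * (Δ^2/4))]
    have hEi : 0 < δ * (Δ * (pstar i - c i)) + δ * (Δ^2/4) - Δ^2/4 := by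
      have : 0 < δ * (Δ * ((pstar i - c i) - (pstar j - c j))) :=
        mul_pos hδ0 (mul_pos hΔ (by linarith))
      linarith [hEj, this]
    linarith [mul_pos hai hEi]
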